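/- Let B₁⁰, B₂⁰ ⊂ ℝ^d be finite sets of vectors with norm at most 1 and mutual incoherence incoh := max{|⟨c,t⟩| : c ∈ B₁⁰, t ∈ B₂⁰}, and let B_α = {λu : u ∈ B_α⁰, λ ∈ [-1,1]}. Suppose for α, β ∈ {1,2}, W_{αβ} ∈ ℝ^{d×d} is O(1)-sparsely represented by bases B_α, B_β, and set W = W₁₁ + W₁₂ + W₂₁ + W₂₂. Then for any x^q = c^q + t^q and x^k = c^k + t^k with c^q, c^k ∈ B₁ and t^q, t^k ∈ B₂, the kernel K_W(z,z') = exp(zᵀWz') satisfies K_W(x^q, x^k) = (1 + O(incoh)) · K_{W₁₁}(c^q, c^k) · K_{W₁₂}(c^q, t^k) · K_{W₂₁}(t^q, c^k) · K_{W₂₂}(t^q, t^k). -/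

import Mathlib

open Finset

/-- Membership in the extended overcomplete basis `{λu : u ∈ B, λ ∈ [-1,1]}`. -/
def extMem {d : ℕ} (B : Finset (EuclideanSpace ℝ (Fin d)))
    (w : EuclideanSpace ℝ (Fin d)) : Prop :=
  ∃ u ∈ B, ∃ l : ℝ, |l| ≤ 1 ∧ w = l • u

/-- The bilinear form `(x, y) ↦ xᵀ W y` is `s`-sparsely represented by the bases `B`, `B'`:
`W = ∑_{k ≤ s} a_k u_k v_kᵀ` with `a_k ∈ [-1,1]`, `u_k ∈ B` (extended), `v_k ∈ B'` (extended). -/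
def SparseRep {d : ℕ} (s : ℕ) (B B' : Finset (EuclideanSpace ℝ (Fin d)))
    (W : EuclideanSpace ℝ (Fin d) → EuclideanSpace ℝ (Fin d) → ℝ) : Prop :=
  ∃ (a : Fin s → ℝ) (u v : Fin s → EuclideanSpace ℝ (Fin d)),
    (∀ k, |a k| ≤ 1) ∧ (∀ k, extMem B (u k)) ∧ (∀ k, extMem B' (v k)) ∧
    ∀ x y, W x y = ∑ k, a k * (inner ℝ (u k) x : ℝ) * (inner ℝ (v k) y : ℝ)

lemma ext_inner_le_one {d : ℕ} {B B' : Finset (EuclideanSpace ℝ (Fin d))}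
    (hB : ∀ u ∈ B, ‖u‖ ≤ 1) (hB' : ∀ u ∈ B', ‖u‖ ≤ 1)
    {x y : EuclideanSpace ℝ (Fin d)} (hx : extMem B x) (hy : extMem B' y) :
    |(inner ℝ x y : ℝ)| ≤ 1 := by
  obtain ⟨u, hu, l, hl, rfl⟩ := hx
  obtain ⟨v, hv, m, hm, rfl⟩ := hy
  have h := abs_real_inner_le_norm u v
  have h1 := hB u hu; have h2 := hB' v hv
  have hn : 0 ≤ ‖u‖ := norm_nonneg _
  have hn' : 0 ≤ ‖v‖ := norm_nonneg _
  rw [real_inner_smul_left, real_inner_smul_right, abs_mul, abs_mul]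
  calc |l| * (|m| * |(inner ℝ u v : ℝ)|) ≤ 1 * (1 * (‖u‖ * ‖v‖)) := by
        gcongr <;> positivity
    _ ≤ 1 := by nlinarith

lemma ext_inner_le_incoh {d : ℕ} {B B' : Finset (EuclideanSpace ℝ (Fin d))}
    {incoh : ℝ}
    (h : ∀ c ∈ B, ∀ t ∈ B', |(inner ℝ c t : ℝ)| ≤ incoh)
    {x y : EuclideanSpace ℝ (Fin d)} (hx : extMem B x) (hy : extMem B' y) :
    |(inner ℝ x y : ℝ)| ≤ incoh := by
  obtain ⟨u, hu, l, hl, rfl⟩ := hx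
  obtain ⟨v, hv, m, hm, rfl⟩ := hy
  have h' := h u hu v hv
  rw [real_inner_smul_left, real_inner_smul_right, abs_mul, abs_mul]
  calc |l| * (|m| * |(inner ℝ u v : ℝ)|) ≤ 1 * (1 * incoh) := by
        gcongr <;> positivity
    _ = incoh := by ring

lemma exp_sub_one_abs_le (x : ℝ) : |Real.exp x - 1| ≤ |x| * Real.exp |x| := by
  have h1 : x + 1 ≤ Real.exp x := Real.add_one_le_exp x
  have h2 : (-|x|) + 1 ≤ Real.exp (-|x|) := Real.add_one_le_exp _
  have h3 : Real.exp x ≤ Real.exp |x| := Real.exp_le_exp.2 (le_abs_self x)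
  have h4 : (1:ℝ) ≤ Real.exp |x| := by
    have := Real.exp_le_exp.2 (abs_nonneg x)
    simpa using this
  have h5 : Real.exp (-|x|) * Real.exp |x| = 1 := by
    rw [← Real.exp_add]; simp
  rw [abs_le]
  constructor
  · nlinarith [abs_nonneg x, le_abs_self x, neg_abs_le x]
  · nlinarith [Real.exp_pos |x|]

lemma sparse_bound {d s : ℕ} {B B' : Finset (EuclideanSpace ℝ (Fin d))}
    {W : EuclideanSpace ℝ (Fin d) → EuclideanSpace ℝ (Fin d) → ℝ}
    (hW : SparseRep s B B' W) {x y : EuclideanSpace ℝ (Fin d)} {bx by_ : ℝ}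
    (hbx : 0 ≤ bx) (hby : 0 ≤ by_)
    (hx : ∀ u, extMem B u → |(inner ℝ u x : ℝ)| ≤ bx)
    (hy : ∀ v, extMem B' v → |(inner ℝ v y : ℝ)| ≤ by_) :
    |W x y| ≤ s * (bx * by_) := by
  obtain ⟨a, u, v, ha, hu, hv, hf⟩ := hW
  rw [hf]
  have hterm : ∀ k : Fin s, |a k * (inner ℝ (u k) x : ℝ) * (inner ℝ (v k) y : ℝ)| ≤ bx * by_ := by
    intro k
    rw [abs_mul, abs_mul]
    have e1 := ha k
    have e2 := hx _ (hu k)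
    have e3 := hy _ (hv k)
    calc |a k| * |(inner ℝ (u k) x : ℝ)| * |(inner ℝ (v k) y : ℝ)| ≤ 1 * bx * by_ := by
          gcongr <;> positivity
      _ = bx * by_ := by ring
  calc |∑ k, a k * (inner ℝ (u k) x : ℝ) * (inner ℝ (v k) y : ℝ)|
      ≤ ∑ k, |a k * (inner ℝ (u k) x : ℝ) * (inner ℝ (v k) y : ℝ)| :=
        Finset.abs_sum_le_sum_abs _ _
    _ ≤ ∑ _k : Fin s, bx * by_ := Finset.sum_le_sum fun k _ => hterm k
    _ = s * (bx * by_) := by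
        rw [Finset.sum_const, Finset.card_univ, Fintype.card_fin, nsmul_eq_mul]

lemma sparse_expand {d s : ℕ} {B B' : Finset (EuclideanSpace ℝ (Fin d))}
    {W : EuclideanSpace ℝ (Fin d) → EuclideanSpace ℝ (Fin d) → ℝ}
    (hW : SparseRep s B B' W) (p q r t : EuclideanSpace ℝ (Fin d)) :
    W (p + q) (r + t) = W p r + W p t + W q r + W q t := by
  obtain ⟨a, u, v, ha, hu, hv, hf⟩ := hW
  simp only [hf, inner_add_right, ← Finset.sum_add_distrib]
  apply Finset.sum_congr rfl
  intro k _
  ring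

/-- Theorem 2: with incoherent bases, the exponential attention kernel factorizes into four
components, each with its own weight matrix, up to a multiplicative `1 + O(incoh)` error. -/
theorem kernel_factorization (s : ℕ) :
    ∃ C > (0 : ℝ), ∀ (d : ℕ) (B₁ B₂ : Finset (EuclideanSpace ℝ (Fin d))),
      (∀ u ∈ B₁, ‖u‖ ≤ 1) → (∀ u ∈ B₂, ‖u‖ ≤ 1) →
      ∀ incoh : ℝ, 0 ≤ incoh → incoh ≤ 1 →
      (∀ c ∈ B₁, ∀ t ∈ B₂, |(inner ℝ c t : ℝ)| ≤ incoh) →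
      ∀ W₁₁ W₁₂ W₂₁ W₂₂ : EuclideanSpace ℝ (Fin d) → EuclideanSpace ℝ (Fin d) → ℝ,
      SparseRep s B₁ B₁ W₁₁ → SparseRep s B₁ B₂ W₁₂ →
      SparseRep s B₂ B₁ W₂₁ → SparseRep s B₂ B₂ W₂₂ →
      ∀ cq ck tq tk : EuclideanSpace ℝ (Fin d),
      extMem B₁ cq → extMem B₁ ck → extMem B₂ tq → extMem B₂ tk →
      ∀ xq xk : EuclideanSpace ℝ (Fin d), xq = cq + tq → xk = ck + tk →
      ∃ θ : ℝ, |θ - 1| ≤ C * incoh ∧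
        Real.exp (W₁₁ xq xk + W₁₂ xq xk + W₂₁ xq xk + W₂₂ xq xk) =
          θ * (Real.exp (W₁₁ cq ck) * Real.exp (W₁₂ cq tk) *
            Real.exp (W₂₁ tq ck) * Real.exp (W₂₂ tq tk)) := by
  refine ⟨12 * s * Real.exp (12 * s) + 1, by positivity, ?_⟩
  intro d B₁ B₂ hB₁ hB₂ incoh h0 h1 hinc W₁₁ W₁₂ W₂₁ W₂₂ h11 h12 h21 h22
    cq ck tq tk hcq hck htq htk xq xk hxq hxk
  subst hxq hxk
  -- symmetric incoherence
  have hinc' : ∀ t ∈ B₂, ∀ c ∈ B₁, |(inner ℝ t c : ℝ)| ≤ incoh := by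
    intro t ht c hc
    rw [real_inner_comm]
    exact hinc c hc t ht
  -- inner product bounds, as functions
  have o1q : ∀ u, extMem B₁ u → |(inner ℝ u cq : ℝ)| ≤ 1 :=
    fun u hu => ext_inner_le_one hB₁ hB₁ hu hcq
  have o1k : ∀ u, extMem B₁ u → |(inner ℝ u ck : ℝ)| ≤ 1 :=
    fun u hu => ext_inner_le_one hB₁ hB₁ hu hck
  have o2q : ∀ u, extMem B₂ u → |(inner ℝ u tq : ℝ)| ≤ 1 :=
    fun u hu => ext_inner_le_one hB₂ hB₂ hu htq
  have o2k : ∀ u, extMem B₂ u → |(inner ℝ u tk : ℝ)| ≤ 1 :=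
    fun u hu => ext_inner_le_one hB₂ hB₂ hu htk
  have i1q : ∀ u, extMem B₂ u → |(inner ℝ u cq : ℝ)| ≤ incoh :=
    fun u hu => ext_inner_le_incoh hinc' hu hcq
  have i1k : ∀ u, extMem B₂ u → |(inner ℝ u ck : ℝ)| ≤ incoh :=
    fun u hu => ext_inner_le_incoh hinc' hu hck
  have i2q : ∀ u, extMem B₁ u → |(inner ℝ u tq : ℝ)| ≤ incoh :=
    fun u hu => ext_inner_le_incoh hinc hu htq
  have i2k : ∀ u, extMem B₁ u → |(inner ℝ u tk : ℝ)| ≤ incoh :=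
    fun u hu => ext_inner_le_incoh hinc hu htk
  have hsi : (s : ℝ) * (incoh * incoh) ≤ s * (1 * incoh) := by
    have : incoh * incoh ≤ 1 * incoh := by nlinarith
    exact mul_le_mul_of_nonneg_left this (Nat.cast_nonneg s)
  have hsc : (s : ℝ) * (incoh * 1) = s * (1 * incoh) := by ring
  -- bounds on the 12 cross terms
  have b1 : |W₁₁ cq tk| ≤ s * (1 * incoh) := sparse_bound h11 zero_le_one h0 o1q i2k
  have b2 : |W₁₁ tq ck| ≤ s * (1 * incoh) := hsc ▸ sparse_bound h11 h0 zero_le_one i2q o1k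
  have b3 : |W₁₁ tq tk| ≤ s * (1 * incoh) := le_trans (sparse_bound h11 h0 h0 i2q i2k) hsi
  have b4 : |W₁₂ cq ck| ≤ s * (1 * incoh) := sparse_bound h12 zero_le_one h0 o1q i1k
  have b5 : |W₁₂ tq tk| ≤ s * (1 * incoh) := hsc ▸ sparse_bound h12 h0 zero_le_one i2q o2k
  have b6 : |W₁₂ tq ck| ≤ s * (1 * incoh) := le_trans (sparse_bound h12 h0 h0 i2q i1k) hsi
  have b7 : |W₂₁ cq ck| ≤ s * (1 * incoh) := hsc ▸ sparse_bound h21 h0 zero_le_one i1q o1k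
  have b8 : |W₂₁ cq tk| ≤ s * (1 * incoh) := le_trans (sparse_bound h21 h0 h0 i1q i2k) hsi
  have b9 : |W₂₁ tq tk| ≤ s * (1 * incoh) := sparse_bound h21 zero_le_one h0 o2q i2k
  have b10 : |W₂₂ cq ck| ≤ s * (1 * incoh) := le_trans (sparse_bound h22 h0 h0 i1q i1k) hsi
  have b11 : |W₂₂ cq tk| ≤ s * (1 * incoh) := hsc ▸ sparse_bound h22 h0 zero_le_one i1q o2k
  have b12 : |W₂₂ tq ck| ≤ s * (1 * incoh) := sparse_bound h22 zero_le_one h0 o2q i1k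
  set D : ℝ := (W₁₁ cq tk + W₁₁ tq ck + W₁₁ tq tk) + (W₁₂ cq ck + W₁₂ tq tk + W₁₂ tq ck)
      + (W₂₁ cq ck + W₂₁ cq tk + W₂₁ tq tk) + (W₂₂ cq ck + W₂₂ cq tk + W₂₂ tq ck) with hD
  have hDb : |D| ≤ 12 * s * incoh := by
    have g1 := abs_add_three (W₁₁ cq tk) (W₁₁ tq ck) (W₁₁ tq tk)
    have g2 := abs_add_three (W₁₂ cq ck) (W₁₂ tq tk) (W₁₂ tq ck)
    have g3 := abs_add_three (W₂₁ cq ck) (W₂₁ cq tk) (W₂₁ tq tk)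
    have g4 := abs_add_three (W₂₂ cq ck) (W₂₂ cq tk) (W₂₂ tq ck)
    have hD4 : |D| ≤ |W₁₁ cq tk + W₁₁ tq ck + W₁₁ tq tk|
        + |W₁₂ cq ck + W₁₂ tq tk + W₁₂ tq ck|
        + |W₂₁ cq ck + W₂₁ cq tk + W₂₁ tq tk|
        + |W₂₂ cq ck + W₂₂ cq tk + W₂₂ tq ck| := by
      rw [hD]
      exact (abs_add_le _ _).trans (add_le_add ((abs_add_le _ _).trans
        (add_le_add (abs_add_le _ _) le_rfl)) le_rfl)
    have : (12:ℝ) * s * incoh = 12 * (s * (1 * incoh)) := by ring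
    rw [this]
    linarith [b1,b2,b3,b4,b5,b6,b7,b8,b9,b10,b11,b12]
  refine ⟨Real.exp D, ?_, ?_⟩
  · have h2 : |D| ≤ 12 * s := le_trans hDb (by nlinarith [Nat.cast_nonneg (α := ℝ) s])
    calc |Real.exp D - 1| ≤ |D| * Real.exp |D| := exp_sub_one_abs_le D
      _ ≤ (12 * s * incoh) * Real.exp (12 * s) := by
          apply mul_le_mul hDb (Real.exp_le_exp.2 h2) (le_of_lt (Real.exp_pos _)) (by positivity)
      _ ≤ (12 * s * Real.exp (12 * s) + 1) * incoh := by nlinarith [Real.exp_pos ((12:ℝ) * s), h0]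
  · have e11 := sparse_expand h11 cq tq ck tk
    have e12 := sparse_expand h12 cq tq ck tk
    have e21 := sparse_expand h21 cq tq ck tk
    have e22 := sparse_expand h22 cq tq ck tk
    have hsum : W₁₁ (cq + tq) (ck + tk) + W₁₂ (cq + tq) (ck + tk) + W₂₁ (cq + tq) (ck + tk)
        + W₂₂ (cq + tq) (ck + tk)
        = D + (W₁₁ cq ck + (W₁₂ cq tk + (W₂₁ tq ck + W₂₂ tq tk))) := by
      rw [e11, e12, e21, e22, hD]; ring
    rw [hsum, Real.exp_add D _, Real.exp_add (W₁₁ cq ck) _,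
      Real.exp_add (W₁₂ cq tk) _, Real.exp_add (W₂₁ tq ck) _]
    ring
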